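/- For every tree T, if r is an endpoint of a longest path in T, then π(T, r) = π(T); that is, the pebbling number is attained at every peripheral vertex. -/

import Mathlib

open SimpleGraph

variable {V : Type*}

/-- Apply a pebbling move along the ordered pair `e`. -/
def applyMove [DecidableEq V] (D : V → ℕ) (e : V × V) : V → ℕ :=
  fun w => if w = e.1 then D w - 2 else if w = e.2 then D w + 1 else D w

/-- A list of ordered pairs is a valid pebbling sequence from `D`. -/
def ValidSeq [DecidableEq V] (G : SimpleGraph V) : (V → ℕ) → List (V × V) → Prop
  | _, [] => True
  | D, e :: l => G.Adj e.1 e.2 ∧ 2 ≤ D e.1 ∧ ValidSeq G (applyMove D e) l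

def applySeq [DecidableEq V] (D : V → ℕ) : List (V × V) → (V → ℕ)
  | [] => D
  | e :: l => applySeq (applyMove D e) l

/-- `r` is `m`-reachable under `D`. -/
def Reaches [DecidableEq V] (G : SimpleGraph V) (D : V → ℕ) (r : V) (m : ℕ) : Prop :=
  ∃ l : List (V × V), ValidSeq G D l ∧ m ≤ applySeq D l r

def Solvable [DecidableEq V] (G : SimpleGraph V) (D : V → ℕ) : Prop :=
  ∀ r : V, Reaches G D r 1

noncomputable def pebNumTo [Fintype V] [DecidableEq V] (G : SimpleGraph V) (r : V) : ℕ :=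
  sInf {k : ℕ | ∀ D : V → ℕ, (∑ v, D v) = k → Reaches G D r 1}

noncomputable def pebNum [Fintype V] [DecidableEq V] (G : SimpleGraph V) : ℕ :=
  sInf {k : ℕ | ∀ D : V → ℕ, (∑ v, D v) = k → Solvable G D}

noncomputable def optPebNum [Fintype V] [DecidableEq V] (G : SimpleGraph V) : ℕ :=
  sInf {k : ℕ | ∃ D : V → ℕ, (∑ v, D v) = k ∧ Solvable G D}


set_option linter.unusedSectionVars false
namespace PebTree

open Finset SimpleGraph Walk

variable [Fintype V] [DecidableEq V] {T : SimpleGraph V}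

/-- In a tree, every path's length equals the distance between its endpoints. -/
lemma path_length_eq_dist (hT : T.IsTree) {x y : V} (p : T.Walk x y) (hp : p.IsPath) :
    p.length = T.dist x y := by
  obtain ⟨q, hq, hql⟩ := hT.isConnected.exists_path_of_dist x y
  obtain ⟨P, hP, hPu⟩ := hT.existsUnique_path x y
  rw [hPu p hp, ← hPu q hq, hql]

lemma tdist_lt_card (hT : T.IsTree) (x y : V) : T.dist x y < Fintype.card V := by
  obtain ⟨q, hq, hql⟩ := hT.isConnected.exists_path_of_dist x y
  rw [← hql]; exact hq.length_lt

lemma dist_split (hT : T.IsTree) {x y z : V} (p : T.Walk x y) (hp : p.IsPath)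
    (hz : z ∈ p.support) : T.dist x z + T.dist z y = T.dist x y := by
  have h1 := path_length_eq_dist hT (p.takeUntil z hz) (hp.takeUntil hz)
  have h2 := path_length_eq_dist hT (p.dropUntil z hz) (hp.dropUntil hz)
  have h3 := path_length_eq_dist hT p hp
  have h4 : (p.takeUntil z hz).length + (p.dropUntil z hz).length = p.length := by
    conv_rhs => rw [← p.take_spec hz]
    rw [Walk.length_append]
  omega

lemma tri (hT : T.IsTree) (x y z : V) : T.dist x z ≤ T.dist x y + T.dist y z :=
  hT.isConnected.dist_triangle

lemma dist_zero (hT : T.IsTree) {x y : V} (h : T.dist x y = 0) : x = y :=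
  (hT.isConnected.dist_eq_zero_iff).mp h

/-- helper: appending two paths meeting only at the junction is a path -/
lemma isPath_append_disj {a b c : V} {p : T.Walk a b} {q : T.Walk b c}
    (hp : p.IsPath) (hq : q.IsPath)
    (h : ∀ x, x ∈ p.support → x ∈ q.support → x = b) : (p.append q).IsPath := by
  rw [Walk.isPath_def, Walk.support_append]
  apply List.Nodup.append hp.support_nodup (hq.support_nodup.sublist (List.tail_sublist _))
  intro x hxp hxq
  have hb : x = b := h x hxp (List.mem_of_mem_tail hxq)
  subst hb
  have : q.support.Nodup := hq.support_nodup
  rw [Walk.support_eq_cons q] at this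
  exact (List.nodup_cons.mp this).1 hxq

/-- a geodesic through `a`: a path x→z passing through a at position dist x a. -/
lemma exists_geodesic_through (hT : T.IsTree) {x z a : V}
    (ha : T.dist x a + T.dist a z = T.dist x z) :
    ∃ P : T.Walk x z, P.IsPath ∧ P.getVert (T.dist x a) = a := by
  obtain ⟨p1, hp1, hl1⟩ := hT.isConnected.exists_path_of_dist x a
  obtain ⟨p2, hp2, hl2⟩ := hT.isConnected.exists_path_of_dist a z
  refine ⟨p1.append p2, ?_, ?_⟩
  · apply Walk.isPath_of_length_eq_dist
    rw [Walk.length_append, hl1, hl2, ha]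
  · rw [Walk.getVert_append]
    simp [hl1]
lemma between_unique (hT : T.IsTree) {x z a b : V}
    (ha : T.dist x a + T.dist a z = T.dist x z)
    (hb : T.dist x b + T.dist b z = T.dist x z)
    (hab : T.dist x a = T.dist x b) : a = b := by
  obtain ⟨Pa, hPa, hga⟩ := exists_geodesic_through hT ha
  obtain ⟨Pb, hPb, hgb⟩ := exists_geodesic_through hT hb
  obtain ⟨P, hP, hPu⟩ := hT.existsUnique_path x z
  rw [hPu Pa hPa] at hga
  rw [hPu Pb hPb] at hgb
  rw [← hga, ← hgb, hab]

lemma getVert_mem_support' {x y : V} (p : T.Walk x y) (i : ℕ) : p.getVert i ∈ p.support := by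
  induction p generalizing i with
  | nil => cases i <;> simp [Walk.getVert]
  | cons h q ih =>
    cases i with
    | zero => simp [Walk.getVert]
    | succ n => simp only [Walk.getVert_cons_succ, Walk.support_cons, List.mem_cons]
                exact Or.inr (ih n)

/-- betweenness ordering: if a and b lie on the geodesic x→z with dist x a ≤ dist x b,
then a lies on the geodesic from x to b. -/
lemma between_of_le (hT : T.IsTree) {x z a b : V}
    (ha : T.dist x a + T.dist a z = T.dist x z)
    (hb : T.dist x b + T.dist b z = T.dist x z)
    (hab : T.dist x a ≤ T.dist x b) : T.dist x a + T.dist a b = T.dist x b := by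
  obtain ⟨p1, hp1, hl1⟩ := hT.isConnected.exists_path_of_dist x b
  obtain ⟨p2, hp2, hl2⟩ := hT.isConnected.exists_path_of_dist b z
  have hPb : (p1.append p2).IsPath := by
    apply Walk.isPath_of_length_eq_dist
    rw [Walk.length_append, hl1, hl2, hb]
  obtain ⟨Pa, hPa, hga⟩ := exists_geodesic_through hT ha
  obtain ⟨P, hP, hPu⟩ := hT.existsUnique_path x z
  rw [hPu Pa hPa] at hga
  rw [← hPu _ hPb] at hga
  have hmem : a ∈ p1.support := by
    rw [Walk.getVert_append] at hga
    rcases lt_or_ge (T.dist x a) p1.length with h | h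
    · rw [if_pos h] at hga; rw [← hga]; exact getVert_mem_support' _ _
    · rw [if_neg (not_lt.mpr h)] at hga
      have : T.dist x a = p1.length := by rw [hl1]; omega
      rw [this, Nat.sub_self] at hga
      rw [← hga, Walk.getVert_zero]; exact Walk.end_mem_support p1
  have := dist_split hT p1 hp1 hmem
  omega

/-- first vertex of a walk belonging to a list -/
lemma exists_first_mem (S : List V) {a b : V} (W : T.Walk a b) :
    b ∈ S → ∃ c, c ∈ S ∧ ∃ (W₁ : T.Walk a c) (W₂ : T.Walk c b),
      W = W₁.append W₂ ∧ ∀ x ∈ W₁.support, x ∈ S → x = c := by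
  induction W with
  | nil => intro hb; exact ⟨_, hb, Walk.nil, Walk.nil, rfl, by simp⟩
  | @cons u v w h W ih =>
    intro hb
    by_cases hu : u ∈ S
    · exact ⟨u, hu, Walk.nil, Walk.cons h W, rfl, by simp⟩
    · obtain ⟨c, hc, W₁, W₂, heq, hdisj⟩ := ih hb
      refine ⟨c, hc, Walk.cons h W₁, W₂, by rw [heq, Walk.cons_append], ?_⟩
      intro x hx hxS
      rw [Walk.support_cons, List.mem_cons] at hx
      rcases hx with rfl | hx
      · exact absurd hxS hu
      · exact hdisj x hx hxS

/-- tree median -/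
lemma exists_median (hT : T.IsTree) (x y z : V) :
    ∃ c, T.dist x y = T.dist x c + T.dist c y ∧ T.dist x z = T.dist x c + T.dist c z ∧
      T.dist y z = T.dist y c + T.dist c z := by
  obtain ⟨W, hW, hWl⟩ := hT.isConnected.exists_path_of_dist x y
  obtain ⟨R, hR, hRl⟩ := hT.isConnected.exists_path_of_dist y z
  obtain ⟨c, hcR, W₁, W₂, heq, hdisj⟩ := exists_first_mem R.support W (Walk.start_mem_support R)
  have hW1 : W₁.IsPath := by
    rw [heq] at hW; exact hW.of_append_left
  have hcW : c ∈ W.support := by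
    rw [heq]; exact Walk.subset_support_append_left _ _ (Walk.end_mem_support W₁)
  have hsplitW := dist_split hT W hW hcW
  have hsplitR := dist_split hT R hR hcR
  have hxz : T.dist x z = T.dist x c + T.dist c z := by
    have hdrop : (R.dropUntil c hcR).IsPath := hR.dropUntil hcR
    have hPath : (W₁.append (R.dropUntil c hcR)).IsPath := by
      apply isPath_append_disj hW1 hdrop
      intro t ht1 ht2
      exact hdisj t ht1 (Walk.support_dropUntil_subset R hcR ht2)
    have hlen := path_length_eq_dist hT _ hPath
    rw [Walk.length_append] at hlen
    have e1 : W₁.length = T.dist x c := path_length_eq_dist hT _ hW1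
    have e2 : (R.dropUntil c hcR).length = T.dist c z := path_length_eq_dist hT _ hdrop
    omega
  exact ⟨c, hsplitW.symm, hxz, hsplitR.symm⟩

/-- adjacency dichotomy w.r.t. a root -/
lemma adj_dist_dichotomy (hT : T.IsTree) {ρ u w : V} (h : T.Adj u w) :
    T.dist ρ w = T.dist ρ u + 1 ∨ T.dist ρ u = T.dist ρ w + 1 := by
  obtain ⟨c, h1, h2, h3⟩ := exists_median hT ρ u w
  have huw : T.dist u w = 1 := by rw [SimpleGraph.dist_eq_one_iff_adj]; exact h
  have hcomm : T.dist u c = T.dist c u := SimpleGraph.dist_comm ..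
  have hd : T.dist u c + T.dist c w = 1 := by omega
  rcases Nat.eq_zero_or_pos (T.dist u c) with h0 | hpos
  · have hcu : c = u := dist_zero hT (by rwa [SimpleGraph.dist_comm] at h0)
    subst hcu
    left; omega
  · have h0 : T.dist c w = 0 := by omega
    have hcw : c = w := dist_zero hT h0
    subst hcw
    right
    omega

section Rooted

variable (T)

/-- children of `u` in the tree rooted at `ρ` -/
noncomputable def children [DecidableRel T.Adj] (ρ u : V) : Finset V :=
  Finset.univ.filter (fun c => T.Adj u c ∧ T.dist ρ c = T.dist ρ u + 1)

/-- the subtree below `u` when rooted at `ρ` -/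
noncomputable def subtree (ρ u : V) : Finset V :=
  Finset.univ.filter (fun w => T.dist ρ w = T.dist ρ u + T.dist u w)

/-- the height of `u` in the tree rooted at `ρ` -/
noncomputable def hgt (ρ u : V) : ℕ := (subtree T ρ u).sup (fun w => T.dist u w)

/-- the weight sum below `u`, excluding `u` -/
noncomputable def gaux (ρ u : V) : ℕ := ∑ w ∈ (subtree T ρ u).erase u, 2 ^ hgt T ρ w

end Rooted

variable [DecidableRel T.Adj] {ρ : V}

lemma mem_children {u c : V} :
    c ∈ children T ρ u ↔ T.Adj u c ∧ T.dist ρ c = T.dist ρ u + 1 := by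
  simp [children]

lemma mem_subtree {u w : V} :
    w ∈ subtree T ρ u ↔ T.dist ρ w = T.dist ρ u + T.dist u w := by
  simp [subtree]

lemma self_mem_subtree (u : V) : u ∈ subtree T ρ u := by
  simp [mem_subtree]

lemma subtree_root_eq_univ : subtree T ρ ρ = Finset.univ := by
  ext w; simp [mem_subtree]

lemma subtree_trans (hT : T.IsTree) {u w y : V} (hw : w ∈ subtree T ρ u)
    (hy : y ∈ subtree T ρ w) :
    y ∈ subtree T ρ u ∧ T.dist u y = T.dist u w + T.dist w y := by
  rw [mem_subtree] at hw hy ⊢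
  have t1 := tri hT u w y
  have t2 := tri hT ρ u y
  omega

lemma child_mem_subtree (hT : T.IsTree) {u c : V} (hc : c ∈ children T ρ u) :
    c ∈ subtree T ρ u ∧ T.dist u c = 1 := by
  rw [mem_children] at hc
  have : T.dist u c = 1 := SimpleGraph.dist_eq_one_iff_adj.mpr hc.1
  rw [mem_subtree]
  omega

lemma mem_subtree_child (hT : T.IsTree) {u c w : V} (hc : c ∈ children T ρ u)
    (hw : w ∈ subtree T ρ c) :
    w ∈ subtree T ρ u ∧ T.dist u w = 1 + T.dist c w := by
  obtain ⟨hcs, hd1⟩ := child_mem_subtree hT hc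
  obtain ⟨h1, h2⟩ := subtree_trans hT hcs hw
  exact ⟨h1, by omega⟩

lemma root_not_mem_child_subtree (hT : T.IsTree) {u c : V} (hc : c ∈ children T ρ u) :
    u ∉ subtree T ρ c := by
  rw [mem_children] at hc
  rw [mem_subtree]
  intro h
  have hne : c ≠ u := by rintro rfl; exact T.irrefl hc.1
  have := hT.isConnected.pos_dist_of_ne hne
  omega

lemma children_subtree_disjoint (hT : T.IsTree) {u : V} {c c' : V}
    (hc : c ∈ children T ρ u) (hc' : c' ∈ children T ρ u) (hne : c ≠ c') :
    ∀ w, w ∈ subtree T ρ c → w ∈ subtree T ρ c' → False := by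
  intro w hw hw'
  obtain ⟨hwu, hd⟩ := mem_subtree_child hT hc hw
  obtain ⟨_, hd'⟩ := mem_subtree_child hT hc' hw'
  rw [mem_subtree] at hw hw'
  obtain ⟨_, h1⟩ := child_mem_subtree hT hc
  obtain ⟨_, h1'⟩ := child_mem_subtree hT hc'
  exact hne (between_unique hT (x := u) (z := w) (a := c) (b := c') (by omega) (by omega) (by omega))

lemma exists_child_of_mem (hT : T.IsTree) {u w : V} (hw : w ∈ subtree T ρ u) (hne : w ≠ u) :
    ∃ c ∈ children T ρ u, w ∈ subtree T ρ c := by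
  rw [mem_subtree] at hw
  have hpos : 0 < T.dist u w := hT.isConnected.pos_dist_of_ne (Ne.symm hne)
  obtain ⟨P, hP, hPl⟩ := hT.isConnected.exists_path_of_dist u w
  set c := P.getVert 1 with hc
  have hadj : T.Adj u c := by
    have h0 : P.getVert 0 = u := Walk.getVert_zero P
    have := P.adj_getVert_succ (i := 0) (by omega)
    rwa [h0] at this
  have hcsup : c ∈ P.support := getVert_mem_support' P 1
  have hsplit := dist_split hT P hP hcsup
  have hd1 : T.dist u c = 1 := SimpleGraph.dist_eq_one_iff_adj.mpr hadj
  have ht1 : T.dist ρ c ≤ T.dist ρ u + 1 := by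
    have := tri hT ρ u c; omega
  have ht2 : T.dist ρ w ≤ T.dist ρ c + T.dist c w := tri hT ρ c w
  have hcc : T.dist ρ c = T.dist ρ u + 1 := by omega
  refine ⟨c, mem_children.mpr ⟨hadj, hcc⟩, ?_⟩
  rw [mem_subtree]
  omega

lemma subtree_erase_biUnion (hT : T.IsTree) (u : V) :
    (subtree T ρ u).erase u = (children T ρ u).biUnion (subtree T ρ) := by
  ext w
  simp only [Finset.mem_erase, Finset.mem_biUnion]
  constructor
  · rintro ⟨hne, hw⟩
    exact exists_child_of_mem hT hw hne
  · rintro ⟨c, hc, hw⟩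
    refine ⟨?_, (mem_subtree_child hT hc hw).1⟩
    intro he
    exact root_not_mem_child_subtree hT hc (he ▸ hw)

lemma dist_le_hgt {u w : V} (hw : w ∈ subtree T ρ u) : T.dist u w ≤ hgt T ρ u :=
  Finset.le_sup hw

lemma exists_hgt_attained (u : V) : ∃ w ∈ subtree T ρ u, hgt T ρ u = T.dist u w :=
  Finset.exists_mem_eq_sup _ ⟨u, self_mem_subtree u⟩ _

lemma child_hgt_lt (hT : T.IsTree) {u c : V} (hc : c ∈ children T ρ u) :
    hgt T ρ c + 1 ≤ hgt T ρ u := by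
  obtain ⟨w, hw, hww⟩ := exists_hgt_attained (T := T) (ρ := ρ) c
  obtain ⟨h1, h2⟩ := mem_subtree_child hT hc hw
  have := dist_le_hgt (T := T) (ρ := ρ) h1
  omega

lemma exists_deep_child (hT : T.IsTree) {u : V} (hne : (children T ρ u).Nonempty) :
    ∃ c ∈ children T ρ u, hgt T ρ c + 1 = hgt T ρ u := by
  obtain ⟨w, hw, hww⟩ := exists_hgt_attained (T := T) (ρ := ρ) u
  obtain ⟨c0, hc0⟩ := hne
  have h1 : 1 ≤ hgt T ρ u := le_trans (by omega) (child_hgt_lt hT hc0)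
  have hwu : w ≠ u := by
    intro he; subst he
    rw [SimpleGraph.dist_self] at hww; omega
  obtain ⟨c, hc, hwc⟩ := exists_child_of_mem hT hw hwu
  obtain ⟨_, hd⟩ := mem_subtree_child hT hc hwc
  have := dist_le_hgt (T := T) (ρ := ρ) hwc
  have := child_hgt_lt hT hc
  refine ⟨c, hc, by omega⟩

lemma subtree_eq_singleton (hT : T.IsTree) {u : V} (h : children T ρ u = ∅) :
    subtree T ρ u = {u} := by
  have := subtree_erase_biUnion (T := T) (ρ := ρ) hT u
  rw [h] at this
  simp only [Finset.biUnion_empty] at this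
  apply Finset.eq_singleton_iff_unique_mem.mpr
  refine ⟨self_mem_subtree u, fun x hx => ?_⟩
  by_contra hne
  have hx' : x ∈ (subtree T ρ u).erase u := Finset.mem_erase.mpr ⟨hne, hx⟩
  rw [this] at hx'
  exact absurd hx' (Finset.notMem_empty x)

lemma gaux_eq_sum_children (hT : T.IsTree) (u : V) :
    gaux T ρ u = ∑ c ∈ children T ρ u, (2 ^ hgt T ρ c + gaux T ρ c) := by
  unfold gaux
  rw [subtree_erase_biUnion hT u, Finset.sum_biUnion]
  · apply Finset.sum_congr rfl
    intro c hc
    rw [← Finset.add_sum_erase _ _ (self_mem_subtree c)]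
  · intro c hc c' hc' hne
    simp only [Finset.disjoint_left]
    intro w hw hw'
    exact children_subtree_disjoint hT hc hc' hne w hw hw'

/-! ### pebbling sequence basics -/

section Seqs
variable {G : SimpleGraph V}

lemma applySeq_cons (D : V → ℕ) (e : V × V) (l : List (V × V)) :
    applySeq D (e :: l) = applySeq (applyMove D e) l := rfl

lemma validSeq_cons {D : V → ℕ} {e : V × V} {l : List (V × V)} :
    ValidSeq G D (e :: l) ↔ G.Adj e.1 e.2 ∧ 2 ≤ D e.1 ∧ ValidSeq G (applyMove D e) l :=
  Iff.rfl

lemma applySeq_append (D : V → ℕ) (l₁ l₂ : List (V × V)) :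
    applySeq D (l₁ ++ l₂) = applySeq (applySeq D l₁) l₂ := by
  induction l₁ generalizing D with
  | nil => rfl
  | cons e l ih => rw [List.cons_append, applySeq_cons, applySeq_cons, ih]

lemma validSeq_append {D : V → ℕ} {l₁ l₂ : List (V × V)}
    (h₁ : ValidSeq G D l₁) (h₂ : ValidSeq G (applySeq D l₁) l₂) :
    ValidSeq G D (l₁ ++ l₂) := by
  induction l₁ generalizing D with
  | nil => exact h₂
  | cons e l ih =>
    obtain ⟨ha, h2, hv⟩ := h₁
    exact ⟨ha, h2, ih hv h₂⟩

/-- all moves have both endpoints in `S` -/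
def MovesIn (S : Finset V) (l : List (V × V)) : Prop := ∀ e ∈ l, e.1 ∈ S ∧ e.2 ∈ S

lemma movesIn_mono {S S' : Finset V} (h : S ⊆ S') {l : List (V × V)} (hl : MovesIn S l) :
    MovesIn S' l := fun e he => ⟨h (hl e he).1, h (hl e he).2⟩

lemma movesIn_append {S : Finset V} {l₁ l₂ : List (V × V)} (h₁ : MovesIn S l₁)
    (h₂ : MovesIn S l₂) : MovesIn S (l₁ ++ l₂) := by
  intro e he
  rcases List.mem_append.mp he with h | h
  exacts [h₁ e h, h₂ e h]

lemma applyMove_apply_of_ne (D : V → ℕ) (e : V × V) {x : V} (h1 : x ≠ e.1) (h2 : x ≠ e.2) :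
    applyMove D e x = D x := by
  simp [applyMove, h1, h2]

lemma applySeq_eq_of_not_mem {S : Finset V} {l : List (V × V)} (hl : MovesIn S l)
    {x : V} (hx : x ∉ S) (D : V → ℕ) : applySeq D l x = D x := by
  induction l generalizing D with
  | nil => rfl
  | cons e l ih =>
    have he := hl e List.mem_cons_self
    rw [applySeq_cons, ih (fun e' he' => hl e' (List.mem_cons_of_mem e he'))]
    exact applyMove_apply_of_ne D e (fun h => hx (h ▸ he.1)) (fun h => hx (h ▸ he.2))

lemma validSeq_transfer {S : Finset V} {l : List (V × V)} (hl : MovesIn S l)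
    {D D' : V → ℕ} (h : ∀ x ∈ S, D x = D' x) (hv : ValidSeq G D l) :
    ValidSeq G D' l ∧ ∀ x ∈ S, applySeq D l x = applySeq D' l x := by
  induction l generalizing D D' with
  | nil => exact ⟨trivial, h⟩
  | cons e l ih =>
    obtain ⟨ha, h2, hv'⟩ := hv
    have he := hl e List.mem_cons_self
    have hagree : ∀ x ∈ S, applyMove D e x = applyMove D' e x := by
      intro x hx
      by_cases hx1 : x = e.1
      · subst hx1; simp [applyMove, h _ hx]
      · by_cases hx2 : x = e.2
        · subst hx2; simp [applyMove, hx1, h _ hx]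
        · rw [applyMove_apply_of_ne _ _ hx1 hx2, applyMove_apply_of_ne _ _ hx1 hx2, h _ hx]
    obtain ⟨hv2, heq⟩ := ih (fun e' he' => hl e' (List.mem_cons_of_mem e he')) hagree hv'
    refine ⟨⟨ha, by rw [← h _ he.1]; exact h2, hv2⟩, heq⟩

lemma replicate_moves {a b : V} (hab : G.Adj a b) :
    ∀ (n : ℕ) (D : V → ℕ), 2 * n ≤ D a →
      ValidSeq G D (List.replicate n (a, b)) ∧
      applySeq D (List.replicate n (a, b)) a = D a - 2 * n ∧
      applySeq D (List.replicate n (a, b)) b = D b + n ∧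
      ∀ x, x ≠ a → x ≠ b → applySeq D (List.replicate n (a, b)) x = D x := by
  have hne : a ≠ b := hab.ne
  intro n
  induction n with
  | zero => intro D h; exact ⟨trivial, by simp [applySeq], by simp [applySeq], fun x _ _ => rfl⟩
  | succ n ih =>
    intro D h
    rw [List.replicate_succ]
    have hm : applyMove D (a, b) a = D a - 2 := by simp [applyMove]
    have hmb : applyMove D (a, b) b = D b + 1 := by simp [applyMove, hne.symm]
    obtain ⟨hv, h1, h2, h3⟩ := ih (applyMove D (a, b)) (by rw [hm]; omega)
    have h2a : 2 ≤ D (a, b).1 := by show 2 ≤ D a; omega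
    refine ⟨⟨hab, h2a, hv⟩, ?_, ?_, ?_⟩
    · rw [applySeq_cons, h1, hm]; omega
    · rw [applySeq_cons, h2, hmb]; omega
    · intro x hx1 hx2
      rw [applySeq_cons, h3 x hx1 hx2, applyMove_apply_of_ne D _ hx1 hx2]

end Seqs

/-! ### the potential function -/

variable (T) in
noncomputable def pf [DecidableRel T.Adj] (ρ : V) (D : V → ℕ) (u : V) : ℕ :=
  D u + ∑ c ∈ (children T ρ u).attach, pf ρ D c.1 / 2
termination_by Fintype.card V - T.dist ρ u
decreasing_by
  have hc := c.2
  simp only [children, Finset.mem_filter] at hc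
  replace hc := hc.2.2
  have hlt : T.dist ρ c.1 < Fintype.card V := by
    have hr : T.Reachable ρ c.1 :=
      SimpleGraph.Reachable.of_dist_ne_zero (by omega)
    obtain ⟨p, hp, hl⟩ := hr.exists_path_of_dist
    rw [← hl]; exact hp.length_lt
  omega

lemma pf_eq (D : V → ℕ) (u : V) :
    pf T ρ D u = D u + ∑ c ∈ children T ρ u, pf T ρ D c / 2 := by
  rw [pf]
  exact congrArg _ (Finset.sum_attach _ fun c => pf T ρ D c / 2)

lemma le_pf (D : V → ℕ) (u : V) : D u ≤ pf T ρ D u := by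
  rw [pf_eq]; omega

lemma pf_congr (hT : T.IsTree) (D D' : V → ℕ) (u : V)
    (h : ∀ x ∈ subtree T ρ u, D x = D' x) : pf T ρ D u = pf T ρ D' u := by
  classical
  rw [pf_eq, pf_eq, h u (self_mem_subtree u)]
  congr 1
  apply Finset.sum_congr rfl
  intro c hc
  rw [pf_congr hT D D' c (fun x hx => h x (mem_subtree_child hT hc hx).1)]
termination_by Fintype.card V - T.dist ρ u
decreasing_by
  classical
  have hcd : T.dist ρ c = T.dist ρ u + 1 := by
    have hc' := hc
    simp only [children, Finset.mem_filter] at hc'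
    exact hc'.2.2
  have hr : T.Reachable ρ c := SimpleGraph.Reachable.of_dist_ne_zero (by omega)
  obtain ⟨p, hp, hl⟩ := hr.exists_path_of_dist
  have := hp.length_lt
  omega

lemma pf_mono (hT : T.IsTree) (D D' : V → ℕ) (u : V)
    (h : ∀ x, D x ≤ D' x) : pf T ρ D u ≤ pf T ρ D' u := by
  classical
  rw [pf_eq, pf_eq]
  have hsum : ∑ c ∈ children T ρ u, pf T ρ D c / 2 ≤
      ∑ c ∈ children T ρ u, pf T ρ D' c / 2 := by
    apply Finset.sum_le_sum
    intro c hc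
    exact Nat.div_le_div_right (pf_mono hT D D' c h)
  have := h u
  omega
termination_by Fintype.card V - T.dist ρ u
decreasing_by
  classical
  have hcd : T.dist ρ c = T.dist ρ u + 1 := by
    have hc' := hc
    simp only [children, Finset.mem_filter] at hc'
    exact hc'.2.2
  have hr : T.Reachable ρ c := SimpleGraph.Reachable.of_dist_ne_zero (by omega)
  obtain ⟨p, hp, hl⟩ := hr.exists_path_of_dist
  have := hp.length_lt
  omega

lemma parent_unique (hT : T.IsTree) {a b b' : V} (hab : T.Adj a b) (hab' : T.Adj a b')
    (h : T.dist ρ a = T.dist ρ b + 1) (h' : T.dist ρ a = T.dist ρ b' + 1) : b = b' := by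
  have d1 : T.dist b a = 1 := SimpleGraph.dist_eq_one_iff_adj.mpr hab.symm
  have d1' : T.dist b' a = 1 := SimpleGraph.dist_eq_one_iff_adj.mpr hab'.symm
  exact between_unique hT (x := ρ) (z := a) (by omega) (by omega) (by omega)

lemma pf_move_up (hT : T.IsTree) {a b : V} (hab : T.Adj a b)
    (hd : T.dist ρ a = T.dist ρ b + 1) (D : V → ℕ) (h2 : 2 ≤ D a) (u : V) (hu : u ≠ a) :
    pf T ρ (applyMove D (a, b)) u = pf T ρ D u := by
  classical
  have hne : a ≠ b := hab.ne
  by_cases hub : u = b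
  · subst hub
    have hachild : a ∈ children T ρ u := mem_children.mpr ⟨hab.symm, hd⟩
    have hpfa : pf T ρ (applyMove D (a, u)) a = pf T ρ D a - 2 := by
      rw [pf_eq, pf_eq]
      have hDa : applyMove D (a, u) a = D a - 2 := by simp [applyMove]
      have hsum : ∑ c ∈ children T ρ a, pf T ρ (applyMove D (a,u)) c / 2
          = ∑ c ∈ children T ρ a, pf T ρ D c / 2 := by
        apply Finset.sum_congr rfl
        intro c hc
        congr 1
        apply pf_congr hT
        intro x hx
        have hxa : x ≠ a := fun he => root_not_mem_child_subtree hT hc (he ▸ hx)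
        have hxb : x ≠ u := by
          intro he; subst he
          have h1 := (mem_children.mp hc).2
          rw [mem_subtree] at hx
          omega
        exact applyMove_apply_of_ne D _ hxa hxb
      rw [hDa, hsum]
      have := le_pf (T := T) (ρ := ρ) D a
      omega
    have e1 := pf_eq (T := T) (ρ := ρ) (applyMove D (a,u)) u
    have e2 := pf_eq (T := T) (ρ := ρ) D u
    have hDb : applyMove D (a,u) u = D u + 1 := by simp [applyMove, hne.symm]
    have hs1 := Finset.add_sum_erase _ (fun c => pf T ρ (applyMove D (a,u)) c / 2) hachild
    have hs2 := Finset.add_sum_erase _ (fun c => pf T ρ D c / 2) hachild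
    have hrest : ∑ c ∈ (children T ρ u).erase a, pf T ρ (applyMove D (a,u)) c / 2
        = ∑ c ∈ (children T ρ u).erase a, pf T ρ D c / 2 := by
      apply Finset.sum_congr rfl
      intro c hc
      have hcm : c ∈ children T ρ u := (Finset.mem_erase.mp hc).2
      rw [pf_move_up hT hab hd D h2 c (Finset.mem_erase.mp hc).1]
    have hpl := le_pf (T := T) (ρ := ρ) D a
    omega
  · have hDu : applyMove D (a,b) u = D u := applyMove_apply_of_ne D _ hu hub
    rw [pf_eq, pf_eq, hDu]
    congr 1
    apply Finset.sum_congr rfl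
    intro c hcm
    have hca : c ≠ a := by
      intro he; subst he
      exact hub (parent_unique hT (mem_children.mp hcm).1.symm hab
        (mem_children.mp hcm).2 hd)
    rw [pf_move_up hT hab hd D h2 c hca]
termination_by Fintype.card V - T.dist ρ u
decreasing_by
  all_goals
    simp only [children, Finset.mem_filter] at hcm
    obtain ⟨-, -, hcd⟩ := hcm
    have hr : T.Reachable ρ c := SimpleGraph.Reachable.of_dist_ne_zero (by omega)
    obtain ⟨p, hp, hl⟩ := hr.exists_path_of_dist
    have := hp.length_lt
    omega

lemma pf_move_down (hT : T.IsTree) {a b : V} (hab : T.Adj a b)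
    (hd : T.dist ρ b = T.dist ρ a + 1) (D : V → ℕ) (h2 : 2 ≤ D a) (u : V) (hu : u ≠ b) :
    pf T ρ (applyMove D (a, b)) u ≤ pf T ρ D u := by
  classical
  have hne : a ≠ b := hab.ne
  by_cases hua : u = a
  · subst hua
    have hbchild : b ∈ children T ρ u := mem_children.mpr ⟨hab, hd⟩
    have hpfb : pf T ρ (applyMove D (u, b)) b = pf T ρ D b + 1 := by
      rw [pf_eq, pf_eq]
      have hDb : applyMove D (u, b) b = D b + 1 := by simp [applyMove, hne.symm]
      have hsum : ∑ c ∈ children T ρ b, pf T ρ (applyMove D (u,b)) c / 2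
          = ∑ c ∈ children T ρ b, pf T ρ D c / 2 := by
        apply Finset.sum_congr rfl
        intro c hc
        congr 1
        apply pf_congr hT
        intro x hx
        have hxb : x ≠ b := fun he => root_not_mem_child_subtree hT hc (he ▸ hx)
        have hxa : x ≠ u := by
          intro he; subst he
          have h1 := (mem_children.mp hc).2
          rw [mem_subtree] at hx
          omega
        exact applyMove_apply_of_ne D _ hxa hxb
      rw [hDb, hsum]
      omega
    have e1 := pf_eq (T := T) (ρ := ρ) (applyMove D (u,b)) u
    have e2 := pf_eq (T := T) (ρ := ρ) D u
    have hDa : applyMove D (u,b) u = D u - 2 := by simp [applyMove]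
    have hs1 := Finset.add_sum_erase _ (fun c => pf T ρ (applyMove D (u,b)) c / 2) hbchild
    have hs2 := Finset.add_sum_erase _ (fun c => pf T ρ D c / 2) hbchild
    have hrest : ∑ c ∈ (children T ρ u).erase b, pf T ρ (applyMove D (u,b)) c / 2
        ≤ ∑ c ∈ (children T ρ u).erase b, pf T ρ D c / 2 := by
      apply Finset.sum_le_sum
      intro c hc
      have hcm : c ∈ children T ρ u := (Finset.mem_erase.mp hc).2
      exact Nat.div_le_div_right (pf_move_down hT hab hd D h2 c (Finset.mem_erase.mp hc).1)
    omega
  · have hDu : applyMove D (a,b) u = D u := applyMove_apply_of_ne D _ hua hu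
    rw [pf_eq, pf_eq, hDu]
    have : ∑ c ∈ children T ρ u, pf T ρ (applyMove D (a,b)) c / 2
        ≤ ∑ c ∈ children T ρ u, pf T ρ D c / 2 := by
      apply Finset.sum_le_sum
      intro c hcm
      have hcb : c ≠ b := by
        intro he; subst he
        exact hua (parent_unique hT (mem_children.mp hcm).1.symm hab.symm
          (mem_children.mp hcm).2 hd)
      exact Nat.div_le_div_right (pf_move_down hT hab hd D h2 c hcb)
    omega
termination_by Fintype.card V - T.dist ρ u
decreasing_by
  all_goals
    simp only [children, Finset.mem_filter] at hcm
    obtain ⟨-, -, hcd⟩ := hcm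
    have hr : T.Reachable ρ c := SimpleGraph.Reachable.of_dist_ne_zero (by omega)
    obtain ⟨p, hp, hl⟩ := hr.exists_path_of_dist
    have := hp.length_lt
    omega

lemma applySeq_le_pf (hT : T.IsTree) (l : List (V × V)) :
    ∀ D : V → ℕ, ValidSeq T D l → applySeq D l ρ ≤ pf T ρ D ρ := by
  induction l with
  | nil => intro D _; exact le_pf D ρ
  | cons e l ih =>
    intro D hv
    obtain ⟨hadj, h2, hv'⟩ := hv
    rw [applySeq_cons]
    refine le_trans (ih _ hv') ?_
    obtain ⟨a, b⟩ := e
    rcases adj_dist_dichotomy hT (ρ := ρ) hadj with h | h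
    · -- dist ρ b = dist ρ a + 1 : move down
      have hb : ρ ≠ b := by
        intro he; subst he
        rw [SimpleGraph.dist_self] at h; omega
      exact pf_move_down hT hadj h D h2 ρ hb
    · -- move up
      have ha : ρ ≠ a := by
        intro he; subst he
        rw [SimpleGraph.dist_self] at h; omega
      exact le_of_eq (pf_move_up hT hadj h D h2 ρ ha)

lemma reach_le_pf (hT : T.IsTree) (D : V → ℕ) (h : Reaches T D ρ 1) :
    1 ≤ pf T ρ D ρ := by
  obtain ⟨l, hv, hle⟩ := h
  exact le_trans hle (applySeq_le_pf hT l D hv)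

lemma exists_reach (hT : T.IsTree) (u : V) (D : V → ℕ) :
    ∃ l, MovesIn (subtree T ρ u) l ∧ ValidSeq T D l ∧ pf T ρ D u ≤ applySeq D l u := by
  classical
  have key : ∀ s : Finset V, s ⊆ children T ρ u → ∀ D : V → ℕ,
      ∃ l, MovesIn (insert u (s.biUnion (subtree T ρ))) l ∧ ValidSeq T D l ∧
        D u + ∑ c ∈ s, pf T ρ D c / 2 ≤ applySeq D l u := by
    intro s
    induction s using Finset.induction_on with
    | empty =>
      intro _ D
      exact ⟨[], by intro e he; simp at he, trivial, by simp [applySeq]⟩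
    | @insert c s hcs ihs =>
      intro hsub D
      have hcm : c ∈ children T ρ u := hsub (Finset.mem_insert_self c s)
      obtain ⟨l₁, hm1, hv1, hp1⟩ := exists_reach hT c D
      set D₁ := applySeq D l₁ with hD₁
      have hD1 : ∀ x, x ∉ subtree T ρ c → D₁ x = D x := fun x hx =>
        applySeq_eq_of_not_mem hm1 hx D
      have hD1u : D₁ u = D u := hD1 u (root_not_mem_child_subtree hT hcm)
      set φ := pf T ρ D c / 2 with hφ
      have hadj : T.Adj c u := (mem_children.mp hcm).1.symm
      obtain ⟨hv2, ha2, hb2, ho2⟩ := replicate_moves hadj φ D₁ (by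
        have := hp1; omega)
      set l₂ := List.replicate φ (c, u) with hl₂
      set D₂ := applySeq D₁ l₂ with hD₂
      have hD2u : D₂ u = D u + φ := by rw [hb2, hD1u]
      have hcu : c ≠ u := hadj.ne
      obtain ⟨l₃, hm3, hv3, hp3⟩ := ihs (fun x hx => hsub (Finset.mem_insert_of_mem hx)) D₂
      have hpf2 : ∀ c' ∈ s, pf T ρ D₂ c' = pf T ρ D c' := by
        intro c' hc'
        apply pf_congr hT
        intro x hx
        have hc'm : c' ∈ children T ρ u := hsub (Finset.mem_insert_of_mem hc')
        have hcc' : c ≠ c' := fun he => hcs (he ▸ hc')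
        have hxc : x ∉ subtree T ρ c := fun hxc =>
          children_subtree_disjoint hT hcm hc'm hcc' x hxc hx
        have hxu : x ≠ u := fun he => root_not_mem_child_subtree hT hc'm (he ▸ hx)
        have hxcne : x ≠ c := fun he => hxc (by rw [he]; exact self_mem_subtree c)
        rw [ho2 x hxcne hxu, hD1 x hxc]
      refine ⟨l₁ ++ (l₂ ++ l₃), ?_, ?_, ?_⟩
      · apply movesIn_append
        · apply movesIn_mono _ hm1
          intro x hx
          exact Finset.mem_insert_of_mem (Finset.mem_biUnion.mpr
            ⟨c, Finset.mem_insert_self c s, hx⟩)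
        · apply movesIn_append
          · intro e he
            rw [List.eq_of_mem_replicate he]
            constructor
            · exact Finset.mem_insert_of_mem (Finset.mem_biUnion.mpr
                ⟨c, Finset.mem_insert_self c s, self_mem_subtree c⟩)
            · exact Finset.mem_insert_self u _
          · apply movesIn_mono _ hm3
            apply Finset.insert_subset_insert
            apply Finset.biUnion_subset_biUnion_of_subset_left
            exact Finset.subset_insert c s
      · exact validSeq_append hv1 (validSeq_append hv2 (by rwa [← hD₂]))
      · rw [applySeq_append, applySeq_append, ← hD₁, ← hD₂]
        refine le_trans ?_ hp3
        rw [hD2u, Finset.sum_insert hcs]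
        have : ∑ c' ∈ s, pf T ρ D₂ c' / 2 = ∑ c' ∈ s, pf T ρ D c' / 2 :=
          Finset.sum_congr rfl (fun c' hc' => by rw [hpf2 c' hc'])
        omega
  obtain ⟨l, hm, hv, hp⟩ := key (children T ρ u) (fun x hx => hx) D
  refine ⟨l, ?_, hv, ?_⟩
  · apply movesIn_mono _ hm
    rw [← subtree_erase_biUnion hT u, Finset.insert_erase (self_mem_subtree u)]
  · rw [pf_eq]
    exact hp
termination_by Fintype.card V - T.dist ρ u
decreasing_by
  simp only [children, Finset.mem_filter] at hcm
  obtain ⟨-, -, hcd⟩ := hcm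
  have hr : T.Reachable ρ c := SimpleGraph.Reachable.of_dist_ne_zero (by omega)
  obtain ⟨p, hp, hl⟩ := hr.exists_path_of_dist
  have := hp.length_lt
  omega

lemma reaches_of_pf (hT : T.IsTree) (D : V → ℕ) (h : 1 ≤ pf T ρ D ρ) :
    Reaches T D ρ 1 := by
  obtain ⟨l, _, hv, hle⟩ := exists_reach (ρ := ρ) hT ρ D
  exact ⟨l, hv, le_trans h hle⟩

lemma one_le_pow2 (n : ℕ) : 1 ≤ 2 ^ n := Nat.one_le_two_pow

lemma sum_le_of_pf_le (hT : T.IsTree) (u : V) (D : V → ℕ) (m : ℕ)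
    (h : pf T ρ D u ≤ m) :
    ∑ w ∈ subtree T ρ u, D w ≤ m * 2 ^ hgt T ρ u + gaux T ρ u := by
  classical
  have hsplit : ∑ w ∈ subtree T ρ u, D w
      = D u + ∑ c ∈ children T ρ u, ∑ w ∈ subtree T ρ c, D w := by
    rw [← Finset.add_sum_erase _ _ (self_mem_subtree u), subtree_erase_biUnion hT u,
      Finset.sum_biUnion]
    intro c hc c' hc' hne
    simp only [Finset.disjoint_left]
    intro w hw hw'
    exact children_subtree_disjoint hT hc hc' hne w hw hw'
  have hstep : ∀ c ∈ children T ρ u, ∑ w ∈ subtree T ρ c, D w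
      ≤ (pf T ρ D c / 2) * 2 ^ hgt T ρ u + (2 ^ hgt T ρ c + gaux T ρ c) := by
    intro c hcm
    have hrec := sum_le_of_pf_le hT c D (pf T ρ D c) le_rfl
    have h1 : pf T ρ D c ≤ 2 * (pf T ρ D c / 2) + 1 := by omega
    have h2 : 2 ^ (hgt T ρ c + 1) ≤ 2 ^ hgt T ρ u :=
      Nat.pow_le_pow_right (by norm_num) (child_hgt_lt hT hcm)
    calc ∑ w ∈ subtree T ρ c, D w ≤ pf T ρ D c * 2 ^ hgt T ρ c + gaux T ρ c := hrec
      _ ≤ (2 * (pf T ρ D c / 2) + 1) * 2 ^ hgt T ρ c + gaux T ρ c := by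
          exact Nat.add_le_add_right (Nat.mul_le_mul_right _ h1) _
      _ = (pf T ρ D c / 2) * 2 ^ (hgt T ρ c + 1) + (2 ^ hgt T ρ c + gaux T ρ c) := by ring
      _ ≤ (pf T ρ D c / 2) * 2 ^ hgt T ρ u + (2 ^ hgt T ρ c + gaux T ρ c) := by
          exact Nat.add_le_add_right (Nat.mul_le_mul_left _ h2) _
  have hsum : ∑ c ∈ children T ρ u, ∑ w ∈ subtree T ρ c, D w
      ≤ (∑ c ∈ children T ρ u, pf T ρ D c / 2) * 2 ^ hgt T ρ u + gaux T ρ u := by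
    calc ∑ c ∈ children T ρ u, ∑ w ∈ subtree T ρ c, D w
        ≤ ∑ c ∈ children T ρ u,
            ((pf T ρ D c / 2) * 2 ^ hgt T ρ u + (2 ^ hgt T ρ c + gaux T ρ c)) :=
          Finset.sum_le_sum hstep
      _ = (∑ c ∈ children T ρ u, pf T ρ D c / 2) * 2 ^ hgt T ρ u
            + ∑ c ∈ children T ρ u, (2 ^ hgt T ρ c + gaux T ρ c) := by
          rw [Finset.sum_add_distrib, Finset.sum_mul]
      _ = (∑ c ∈ children T ρ u, pf T ρ D c / 2) * 2 ^ hgt T ρ u + gaux T ρ u := by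
          rw [← gaux_eq_sum_children hT u]
  have hm : D u + ∑ c ∈ children T ρ u, pf T ρ D c / 2 ≤ m := by
    rw [← pf_eq]; exact h
  set S := ∑ c ∈ children T ρ u, pf T ρ D c / 2
  have hfin : D u + S * 2 ^ hgt T ρ u ≤ m * 2 ^ hgt T ρ u := by
    calc D u + S * 2 ^ hgt T ρ u ≤ D u * 2 ^ hgt T ρ u + S * 2 ^ hgt T ρ u := by
          have := one_le_pow2 (hgt T ρ u)
          have := Nat.le_mul_of_pos_right (D u) (by omega : 0 < 2 ^ hgt T ρ u)
          omega
      _ = (D u + S) * 2 ^ hgt T ρ u := by ring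
      _ ≤ m * 2 ^ hgt T ρ u := Nat.mul_le_mul_right _ hm
  omega
termination_by Fintype.card V - T.dist ρ u
decreasing_by
  simp only [children, Finset.mem_filter] at hcm
  obtain ⟨-, -, hcd⟩ := hcm
  have hr : T.Reachable ρ c := SimpleGraph.Reachable.of_dist_ne_zero (by omega)
  obtain ⟨p, hp, hl⟩ := hr.exists_path_of_dist
  have := hp.length_lt
  omega

lemma exists_extremal (hT : T.IsTree) (u : V) (m : ℕ) :
    ∃ D : V → ℕ, (∀ x, x ∉ subtree T ρ u → D x = 0) ∧
      (∑ x, D x) = m * 2 ^ hgt T ρ u + gaux T ρ u ∧ pf T ρ D u ≤ m := by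
  classical
  by_cases hch : children T ρ u = ∅
  · have hsub := subtree_eq_singleton hT hch
    have hh : hgt T ρ u = 0 := by
      unfold hgt
      rw [hsub, Finset.sup_singleton, SimpleGraph.dist_self]
    have hg : gaux T ρ u = 0 := by
      unfold gaux
      rw [hsub]
      simp
    refine ⟨fun x => if x = u then m else 0, ?_, ?_, ?_⟩
    · intro x hx
      have : x ≠ u := fun he => hx (by rw [he]; exact self_mem_subtree u)
      simp [this]
    · rw [Finset.sum_ite_eq' Finset.univ u (fun _ => m)]
      simp [hh, hg]
    · rw [pf_eq, hch]
      simp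
  · obtain ⟨c0, hc0, hc0h⟩ := exists_deep_child hT (Finset.nonempty_iff_ne_empty.mpr hch)
    have hFc : ∀ c, c ∈ children T ρ u → ∃ Dc : V → ℕ,
        (∀ x, x ∉ subtree T ρ c → Dc x = 0) ∧
        (∑ x, Dc x) = (if c = c0 then 2*m+1 else 1) * 2 ^ hgt T ρ c + gaux T ρ c ∧
        pf T ρ Dc c ≤ (if c = c0 then 2*m+1 else 1) := by
      intro c hcm
      exact exists_extremal hT c (if c = c0 then 2*m+1 else 1)
    choose! F hF0 hFs hFp using hFc
    set D : V → ℕ := fun x => ∑ c ∈ children T ρ u, F c x with hD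
    have hDout : ∀ x, x ∉ subtree T ρ u → D x = 0 := by
      intro x hx
      apply Finset.sum_eq_zero
      intro c hc
      apply hF0 c hc
      intro hxc
      exact hx (mem_subtree_child hT hc hxc).1
    have hDu : D u = 0 := by
      apply Finset.sum_eq_zero
      intro c hc
      exact hF0 c hc u (root_not_mem_child_subtree hT hc)
    have hDval : ∀ c ∈ children T ρ u, ∀ x ∈ subtree T ρ c, D x = F c x := by
      intro c hc x hx
      show ∑ c' ∈ children T ρ u, F c' x = F c x
      rw [← Finset.add_sum_erase _ (fun c' => F c' x) hc]
      have : ∑ c' ∈ (children T ρ u).erase c, F c' x = 0 := by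
        apply Finset.sum_eq_zero
        intro c' hc'
        apply hF0 c' (Finset.mem_erase.mp hc').2
        intro hxc'
        exact children_subtree_disjoint hT hc (Finset.mem_erase.mp hc').2
          (fun he => (Finset.mem_erase.mp hc').1 he.symm) x hx hxc'
      omega
    have hpfD : ∀ c ∈ children T ρ u, pf T ρ D c = pf T ρ (F c) c := by
      intro c hc
      exact pf_congr hT D (F c) c (hDval c hc)
    refine ⟨D, hDout, ?_, ?_⟩
    · have : ∑ x, D x = ∑ c ∈ children T ρ u, ∑ x, F c x := by
        rw [hD, Finset.sum_comm]
      rw [this]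
      have hterm : ∑ c ∈ children T ρ u, ∑ x, F c x
          = ∑ c ∈ children T ρ u,
            ((if c = c0 then 2*m+1 else 1) * 2 ^ hgt T ρ c + gaux T ρ c) :=
        Finset.sum_congr rfl (fun c hc => hFs c hc)
      rw [hterm, gaux_eq_sum_children hT u]
      rw [← Finset.add_sum_erase _ _ hc0, ← Finset.add_sum_erase _
        (fun c => 2 ^ hgt T ρ c + gaux T ρ c) hc0]
      have hre : ∑ c ∈ (children T ρ u).erase c0,
          ((if c = c0 then 2*m+1 else 1) * 2 ^ hgt T ρ c + gaux T ρ c)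
          = ∑ c ∈ (children T ρ u).erase c0, (2 ^ hgt T ρ c + gaux T ρ c) := by
        apply Finset.sum_congr rfl
        intro c hc
        rw [if_neg (Finset.mem_erase.mp hc).1]
        ring
      rw [hre, if_pos rfl]
      have hpow : 2 ^ hgt T ρ u = 2 * 2 ^ hgt T ρ c0 := by
        rw [← hc0h, pow_succ]; ring
      rw [hpow]
      ring
    · rw [pf_eq, hDu]
      have hb : ∀ c ∈ children T ρ u, pf T ρ D c / 2 ≤ (if c = c0 then m else 0) := by
        intro c hc
        rw [hpfD c hc]
        have := hFp c hc
        by_cases hcc : c = c0 <;> simp [hcc] at this ⊢ <;> omega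
      calc 0 + ∑ c ∈ children T ρ u, pf T ρ D c / 2
          ≤ ∑ c ∈ children T ρ u, (if c = c0 then m else 0) := by
            rw [Nat.zero_add]; exact Finset.sum_le_sum hb
        _ = m := by rw [Finset.sum_ite_eq' _ c0 (fun _ => m)]; simp [hc0]
termination_by Fintype.card V - T.dist ρ u
decreasing_by
  simp only [children, Finset.mem_filter] at hcm
  obtain ⟨-, -, hcd⟩ := hcm
  have hr : T.Reachable ρ c := SimpleGraph.Reachable.of_dist_ne_zero (by omega)
  obtain ⟨p, hp, hl⟩ := hr.exists_path_of_dist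
  have := hp.length_lt
  omega

lemma exists_le_sum (D : V → ℕ) (k : ℕ) (h : k ≤ ∑ x, D x) :
    ∃ D' : V → ℕ, (∀ x, D' x ≤ D x) ∧ ∑ x, D' x = k := by
  classical
  by_cases he : ∑ x, D x = k
  · exact ⟨D, fun x => le_rfl, he⟩
  · have hlt : k < ∑ x, D x := lt_of_le_of_ne h (fun hh => he hh.symm)
    have hex : ∃ x0, 0 < D x0 := by
      by_contra hno
      push_neg at hno
      have : ∑ x, D x = 0 := Finset.sum_eq_zero (fun x _ => by have := hno x; omega)
      omega
    obtain ⟨x0, hx0⟩ := hex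
    set D2 := Function.update D x0 (D x0 - 1) with hD2
    have hsum2 : ∑ x, D2 x = (∑ x, D x) - 1 := by
      rw [hD2, Finset.sum_update_of_mem (Finset.mem_univ x0),
        Finset.sdiff_singleton_eq_erase]
      have h3 := Finset.add_sum_erase Finset.univ D (Finset.mem_univ x0)
      omega
    obtain ⟨D', hle, hs⟩ := exists_le_sum D2 k (by omega)
    refine ⟨D', fun x => ?_, hs⟩
    refine le_trans (hle x) ?_
    rw [hD2]
    by_cases hx : x = x0
    · subst hx; rw [Function.update_self]; omega
    · rw [Function.update_of_ne hx]
termination_by (∑ x, D x) - k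
decreasing_by
  have h4 : ∑ x, Function.update D x0 (D x0 - 1) x = (∑ x, D x) - 1 := by
    rw [Finset.sum_update_of_mem (Finset.mem_univ x0), Finset.sdiff_singleton_eq_erase]
    have h3 := Finset.add_sum_erase Finset.univ D (Finset.mem_univ x0)
    omega
  omega

/-! ### walks and spines -/

lemma getVert_dists (hT : T.IsTree) {v r : V} (q : T.Walk v r) (hq : q.IsPath) :
    ∀ i, i ≤ q.length →
      T.dist v (q.getVert i) = i ∧ T.dist (q.getVert i) r = q.length - i := by
  induction q with
  | nil =>
    intro i hi
    have hi0 : i = 0 := by simpa using hi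
    subst hi0
    simp [Walk.getVert_zero, SimpleGraph.dist_self]
  | @cons a b c h q ih =>
    intro i hi
    cases i with
    | zero =>
      have hlen := path_length_eq_dist hT _ hq
      constructor
      · simp [Walk.getVert_zero, SimpleGraph.dist_self]
      · simp only [Walk.getVert_zero, Nat.sub_zero]
        omega
    | succ j =>
      rw [Walk.getVert_cons_succ]
      have hq' : q.IsPath := hq.of_cons
      have hj : j ≤ q.length := by simp only [Walk.length_cons] at hi; omega
      obtain ⟨ih1, ih2⟩ := ih hq' j hj
      set x := q.getVert j
      have hxs : x ∈ (Walk.cons h q).support := by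
        rw [Walk.support_cons, List.mem_cons]
        exact Or.inr (getVert_mem_support' q j)
      have hsplit := dist_split hT _ hq hxs
      have hlen := path_length_eq_dist hT _ hq
      have htri : T.dist a x ≤ T.dist a b + T.dist b x := tri hT a b x
      have hab : T.dist a b = 1 := SimpleGraph.dist_eq_one_iff_adj.mpr h
      have hlc : (Walk.cons h q).length = q.length + 1 := rfl
      constructor
      · omega
      · omega

lemma eq_getVert_of (hT : T.IsTree) {v r : V} (q : T.Walk v r) (hq : q.IsPath) {x : V}
    (hx : T.dist v x + T.dist x r = q.length) : x = q.getVert (T.dist v x) := by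
  have hlen := path_length_eq_dist hT _ hq
  have hle : T.dist v x ≤ q.length := by omega
  obtain ⟨h1, h2⟩ := getVert_dists hT q hq (T.dist v x) hle
  exact between_unique hT (x := v) (z := r) (by omega) (by omega) h1.symm

lemma mem_support_iff_dist (hT : T.IsTree) {v r : V} (q : T.Walk v r) (hq : q.IsPath) (x : V) :
    x ∈ q.support ↔ T.dist v x + T.dist x r = q.length := by
  constructor
  · intro hx
    have := dist_split hT q hq hx
    have := path_length_eq_dist hT q hq
    omega
  · intro hx
    rw [eq_getVert_of hT q hq hx]
    exact getVert_mem_support' q _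

/-- subtrees of off-path vertices don't depend on which end of the path is the root -/
lemma mem_subtree_swap (hT : T.IsTree) {v r x y : V}
    (hxs : ¬ (T.dist v x + T.dist x r = T.dist v r))
    (hy : y ∈ subtree T v x) : y ∈ subtree T r x := by
  rw [mem_subtree] at hy ⊢
  obtain ⟨c, hc1, hc2, hc3⟩ := exists_median hT v r x
  -- hc1 : dvr = dvc + dcr ; hc2 : dvx = dvc + dcx ; hc3 : drx = drc + dcx
  obtain ⟨c', hd1, hd2, hd3⟩ := exists_median hT r v y
  -- hd1 : drv = drc' + dc'v ; hd2 : dry = drc' + dc'y ; hd3 : dvy = dvc' + dc'y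
  have comm1 : T.dist v r = T.dist r v := SimpleGraph.dist_comm ..
  have comm2 : T.dist c r = T.dist r c := SimpleGraph.dist_comm ..
  have comm3 : T.dist c' v = T.dist v c' := SimpleGraph.dist_comm ..
  have claim1 : T.dist c y = T.dist c x + T.dist x y := by
    have t1 := tri hT c x y
    have t2 := tri hT v c y
    omega
  -- c is on the geodesic from v to y
  have hcy : T.dist v c + T.dist c y = T.dist v y := by omega
  -- c' is on the geodesic from v to y
  have hc'y : T.dist v c' + T.dist c' y = T.dist v y := by omega
  -- c and c' both on geodesic v → r
  have hcr : T.dist v c + T.dist c r = T.dist v r := by omega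
  have hc'r : T.dist v c' + T.dist c' r = T.dist v r := by
    have commA : T.dist r c' = T.dist c' r := SimpleGraph.dist_comm ..
    omega
  rcases le_or_gt (T.dist v c') (T.dist v c) with hcase | hcase
  · -- c' before c: direct computation
    have hbet := between_of_le hT (x := v) (z := y) hc'y hcy hcase
    -- hbet : dvc' + dc'c = dvc
    have hsplit : T.dist c' y = T.dist c' c + T.dist c y := by omega
    have t3 := tri hT r c' c
    have t4 := tri hT r c y
    have t5 := tri hT r c x
    -- dry = drc' + dc'y = drc' + dc'c + dcy ≥ drc + dcy ≥ dry
    omega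
  · -- c strictly before c'
    exfalso
    have hbet := between_of_le hT (x := v) (z := y) hcy hc'y (le_of_lt hcase)
    -- hbet : dvc + dcc' = dvc'
    rcases le_or_gt (T.dist v c') (T.dist v x) with hcase2 | hcase2
    · -- c' on geodesic v → x : contradiction with median property of c
      have hxy : T.dist v x + T.dist x y = T.dist v y := by omega
      have hbet2 := between_of_le hT (x := v) (z := y) hc'y hxy hcase2
      -- hbet2 : dvc' + dc'x = dvx
      have t6 := tri hT r c' x
      have commB : T.dist r c' = T.dist c' r := SimpleGraph.dist_comm ..
      -- drx ≤ drc' + dc'x = (dvr - dvc') + (dvx - dvc') < drc + dcx = drx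
      omega
    · -- x on geodesic v → c' ⊆ geodesic v → r : x on spine, contradiction
      have hxy : T.dist v x + T.dist x y = T.dist v y := by omega
      have hbet2 := between_of_le hT (x := v) (z := y) hxy hc'y (le_of_lt hcase2)
      -- hbet2 : dvx + dxc' = dvc'
      have t7 := tri hT x c' r
      have t8 := tri hT v x r
      omega

lemma subtree_swap (hT : T.IsTree) {v r x : V}
    (hxs : ¬ (T.dist v x + T.dist x r = T.dist v r)) :
    subtree T v x = subtree T r x := by
  ext y
  constructor
  · exact mem_subtree_swap hT hxs
  · apply mem_subtree_swap hT
    have c1 : T.dist v r = T.dist r v := SimpleGraph.dist_comm ..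
    have c2 : T.dist v x = T.dist x v := SimpleGraph.dist_comm ..
    have c3 : T.dist r x = T.dist x r := SimpleGraph.dist_comm ..
    omega

lemma hgt_swap (hT : T.IsTree) {v r x : V}
    (hxs : ¬ (T.dist v x + T.dist x r = T.dist v r)) :
    hgt T v x = hgt T r x := by
  unfold hgt
  rw [subtree_swap hT hxs]

/-! ### the key peripheral inequality -/

lemma key_ineq (hT : T.IsTree) {u₀ r : V} (p : T.Walk u₀ r) (hp : p.IsPath)
    (hmax : ∀ (a b : V) (q : T.Walk a b), q.IsPath → q.length ≤ p.length)
    {v : V} (q : T.Walk v r) (hq : q.IsPath) {j : ℕ} (hj1 : 1 ≤ j) (hj2 : j ≤ q.length) :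
    hgt T v (q.getVert j) ≤ hgt T r (q.getVert (q.length - j)) := by
  classical
  set k := q.length with hk
  have hdvr : T.dist v r = k := (path_length_eq_dist hT q hq).symm
  have dmax : ∀ x y : V, T.dist x y ≤ p.length := by
    intro x y
    obtain ⟨g, hg, hgl⟩ := hT.isConnected.exists_path_of_dist x y
    rw [← hgl]; exact hmax x y g hg
  set d := p.length with hd
  set wj := q.getVert j with hwj
  set wk := q.getVert (k - j) with hwk
  obtain ⟨hwj1, hwj2⟩ := getVert_dists hT q hq j hj2
  obtain ⟨hwk1, hwk2⟩ := getVert_dists hT q hq (k - j) (by omega)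
  simp only [← hwj, ← hwk, ← hk] at hwj1 hwj2 hwk1 hwk2
  obtain ⟨y, hy, hyv⟩ := exists_hgt_attained (T := T) (ρ := v) wj
  rw [hyv]
  rw [mem_subtree] at hy
  set val := T.dist wj y with hval
  obtain ⟨c₀, hc1, hc2, hc3⟩ := exists_median hT v r y
  -- hc1 : dvr = dvc₀ + dc₀r ; hc2 : dvy = dvc₀ + dc₀y ; hc3 : dry = drc₀ + dc₀y
  set m := T.dist v c₀ with hm
  set t := T.dist c₀ y with ht
  have commrc : T.dist r c₀ = T.dist c₀ r := SimpleGraph.dist_comm ..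
  have hdc0r : T.dist c₀ r = k - m ∧ m ≤ k := by omega
  have hjm : j ≤ m := by
    have t1 := tri hT r wj y
    have commrwj : T.dist r wj = T.dist wj r := SimpleGraph.dist_comm ..
    omega
  have hvaleq : val = m - j + t ∧ m - j + t + j = m + t := by omega
  have hrwk : T.dist r wk = j := by
    have : T.dist wk r = j := by omega
    rw [← this, SimpleGraph.dist_comm]
  rcases le_or_gt (m + t) k with hA | hB
  · -- case A : witness v
    have hvmem : v ∈ subtree T r wk := by
      rw [mem_subtree]
      have commrv : T.dist r v = k := by rw [SimpleGraph.dist_comm]; omega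
      have commwkv : T.dist wk v = k - j := by rw [SimpleGraph.dist_comm]; omega
      omega
    have hle := dist_le_hgt (T := T) (ρ := r) hvmem
    have commwkv : T.dist wk v = k - j := by rw [SimpleGraph.dist_comm]; omega
    omega
  · -- case B : 2m ≤ k and witness y
    obtain ⟨z, _, hz⟩ := Finset.exists_max_image Finset.univ (fun z => T.dist r z)
      ⟨r, Finset.mem_univ r⟩
    have hzmax : ∀ z' : V, T.dist r z' ≤ T.dist r z := fun z' => hz z' (Finset.mem_univ z')
    have hdz : T.dist r z = d := by
      have h1 : T.dist u₀ r = d := (path_length_eq_dist hT p hp).symm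
      have h2 : T.dist r u₀ = d := by rw [SimpleGraph.dist_comm]; omega
      have := hzmax u₀
      have := dmax r z
      omega
    obtain ⟨c₂, he1, he2, he3⟩ := exists_median hT v r z
    -- he1 : dvr = dvc₂ + dc₂r ; he2 : dvz = dvc₂ + dc₂z ; he3 : drz = drc₂ + dc₂z
    set m₂ := T.dist v c₂ with hm₂
    set t₂ := T.dist c₂ z with ht₂
    have commrc₂ : T.dist r c₂ = T.dist c₂ r := SimpleGraph.dist_comm ..
    have h2m₂ : 2 * m₂ ≤ k := by
      have := dmax v z
      omega
    have hmm₂ : m ≤ m₂ := by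
      by_contra hcon
      push_neg at hcon
      obtain ⟨c₃, hf1, hf2, hf3⟩ := exists_median hT y z r
      -- hf1 : dyz = dyc₃ + dc₃z ; hf2 : dyr = dyc₃ + dc₃r ; hf3 : dzr = dzc₃ + dc₃r
      set R3 := T.dist c₃ r with hR3
      have commry : T.dist r y = T.dist y r := SimpleGraph.dist_comm ..
      have commrz : T.dist r z = T.dist z r := SimpleGraph.dist_comm ..
      have commrc₃ : T.dist r c₃ = T.dist c₃ r := SimpleGraph.dist_comm ..
      have commyc₃ : T.dist y c₃ = T.dist c₃ y := SimpleGraph.dist_comm ..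
      have commzc₃ : T.dist z c₃ = T.dist c₃ z := SimpleGraph.dist_comm ..
      have hdyz := dmax y z
      -- (k - m) + t ≤ 2 * R3
      have hstar : (k - m) + t ≤ 2 * R3 := by omega
      have hR3le : R3 ≤ k - m := by
        by_contra hcon2
        push_neg at hcon2
        -- c₀ and c₃ both on geodesic r → y
        have hc₀ry : T.dist r c₀ + T.dist c₀ y = T.dist r y := by omega
        have hc₃ry : T.dist r c₃ + T.dist c₃ y = T.dist r y := by omega
        have hbet := between_of_le hT (x := r) (z := y) hc₀ry hc₃ry (by omega)
        -- hbet : drc₀ + dc₀c₃ = drc₃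
        set δ := T.dist c₀ c₃ with hδ
        have hδpos : 0 < δ ∧ δ = R3 - (k - m) := by omega
        have hdc₃y : T.dist c₃ y = t - δ := by omega
        -- dist v c₃ = m + δ
        have hvc₃ : T.dist v c₃ = m + δ := by
          have t1 := tri hT v c₀ c₃
          have t2 := tri hT v c₃ y
          omega
        -- now compare with z-side
        have hc₂rz : T.dist r c₂ + T.dist c₂ z = T.dist r z := by omega
        have hc₃rz : T.dist r c₃ + T.dist c₃ z = T.dist r z := by omega
        rcases le_or_gt R3 (k - m₂) with hcase3 | hcase3
        · -- c₃ on geodesic r → c₂ : c₃ is on the spine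
          have hbet2 := between_of_le hT (x := r) (z := z) hc₃rz hc₂rz (by omega)
          -- hbet2 : drc₃ + dc₃c₂ = drc₂
          have commc₂v : T.dist c₂ v = T.dist v c₂ := SimpleGraph.dist_comm ..
          have commrv : T.dist r v = T.dist v r := SimpleGraph.dist_comm ..
          have commvc₃ : T.dist v c₃ = T.dist c₃ v := SimpleGraph.dist_comm ..
          have t1 := tri hT r c₃ v
          have t2 := tri hT c₃ c₂ v
          -- dist r v ≤ R3 + dc₃c₂ + m₂ = k forces dvc₃ = k - R3
          have t3 := tri hT v c₃ r
          omega
        · -- c₂ on geodesic r → c₃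
          have hbet2 := between_of_le hT (x := r) (z := z) hc₂rz hc₃rz (by omega)
          -- hbet2 : drc₂ + dc₂c₃ = drc₃
          set δ₂ := T.dist c₂ c₃ with hδ₂
          have hδ₂eq : δ₂ = R3 - (k - m₂) := by omega
          have hdc₃z : T.dist c₃ z = t₂ - δ₂ ∧ δ₂ ≤ t₂ := by omega
          have hvc₃' : T.dist v c₃ = m₂ + δ₂ := by
            have t1 := tri hT v c₂ c₃
            have t2 := tri hT v c₃ z
            omega
          omega
      omega
    -- 2m ≤ k established; witness y
    have h2m : 2 * m ≤ k := by omega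
    have hwkc₀ : T.dist c₀ wk = (k - j) - m := by
      have hc₀vr : T.dist v c₀ + T.dist c₀ r = T.dist v r := by omega
      have hwkvr : T.dist v wk + T.dist wk r = T.dist v r := by omega
      have hbet := between_of_le hT (x := v) (z := r) hc₀vr hwkvr (by omega)
      omega
    have hwky : T.dist wk y = (k - j) - m + t := by
      have t1 := tri hT wk c₀ y
      have t2 := tri hT r wk y
      have commrwk : T.dist r wk = T.dist wk r := SimpleGraph.dist_comm ..
      have commwkc₀ : T.dist wk c₀ = T.dist c₀ wk := SimpleGraph.dist_comm ..
      omega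
    have hymem : y ∈ subtree T r wk := by
      rw [mem_subtree]
      omega
    have hle := dist_le_hgt (T := T) (ρ := r) hymem
    omega

lemma peripheral_max (hT : T.IsTree) {u₀ r : V} (p : T.Walk u₀ r) (hp : p.IsPath)
    (hmax : ∀ (a b : V) (q : T.Walk a b), q.IsPath → q.length ≤ p.length) (v : V) :
    gaux T v v ≤ gaux T r r := by
  classical
  by_cases hvr : v = r
  · subst hvr; exact le_rfl
  obtain ⟨q, hq, hql⟩ := hT.isConnected.exists_path_of_dist v r
  set k := q.length with hk
  have hdvr : T.dist v r = k := hql.symm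
  have hk1 : 1 ≤ k := by
    have := hT.isConnected.pos_dist_of_ne hvr
    omega
  set S := q.support.toFinset with hS
  have hvS : v ∈ S := by rw [hS, List.mem_toFinset]; exact Walk.start_mem_support q
  have hrS : r ∈ S := by rw [hS, List.mem_toFinset]; exact Walk.end_mem_support q
  have hGv : gaux T v v = ∑ w ∈ Finset.univ.erase v, 2 ^ hgt T v w := by
    unfold gaux; rw [subtree_root_eq_univ]
  have hGr : gaux T r r = ∑ w ∈ Finset.univ.erase r, 2 ^ hgt T r w := by
    unfold gaux; rw [subtree_root_eq_univ]
  have hdisj : ∀ x : V, Disjoint (Finset.univ \ S) (S.erase x) := by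
    intro x
    rw [Finset.disjoint_left]
    intro a ha hb
    exact (Finset.mem_sdiff.mp ha).2 (Finset.mem_of_mem_erase hb)
  have hsplit : ∀ x ∈ S, Finset.univ.erase x = (Finset.univ \ S) ∪ (S.erase x) := by
    intro x hx
    ext w
    simp only [Finset.mem_erase, Finset.mem_univ, and_true, Finset.mem_union,
      Finset.mem_sdiff, true_and]
    constructor
    · intro hw
      by_cases hwS : w ∈ S
      · exact Or.inr ⟨hw, hwS⟩
      · exact Or.inl hwS
    · rintro (hw | hw)
      · rintro rfl; exact hw hx
      · exact hw.1
  have hoff : ∀ x ∈ Finset.univ \ S, 2 ^ hgt T v x = 2 ^ hgt T r x := by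
    intro x hx
    have hxs : x ∉ q.support := by
      intro hmem
      exact (Finset.mem_sdiff.mp hx).2 (by rw [hS, List.mem_toFinset]; exact hmem)
    have hns : ¬ (T.dist v x + T.dist x r = T.dist v r) := by
      rw [hdvr]
      intro hcon
      exact hxs ((mem_support_iff_dist hT q hq x).mpr hcon)
    rw [hgt_swap hT hns]
  have hinj : ∀ i ≤ k, ∀ j ≤ k, q.getVert i = q.getVert j → i = j := by
    intro i hi j hj he
    have h1 := (getVert_dists hT q hq i hi).1
    have h2 := (getVert_dists hT q hq j hj).1
    rw [he] at h1
    omega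
  have himgv : S.erase v = (Finset.Icc 1 k).image q.getVert := by
    ext x
    simp only [Finset.mem_erase, Finset.mem_image, Finset.mem_Icc, hS, List.mem_toFinset]
    constructor
    · rintro ⟨hxv, hxs⟩
      have hd := (mem_support_iff_dist hT q hq x).mp hxs
      have hpos : 0 < T.dist v x := hT.isConnected.pos_dist_of_ne (Ne.symm hxv)
      exact ⟨T.dist v x, ⟨by omega, by omega⟩, (eq_getVert_of hT q hq (by omega)).symm⟩
    · rintro ⟨j, ⟨hj1, hj2⟩, rfl⟩
      have h1 := (getVert_dists hT q hq j hj2).1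
      constructor
      · intro he
        rw [he, SimpleGraph.dist_self] at h1
        omega
      · exact getVert_mem_support' q j
  have himgr : S.erase r = (Finset.Icc 0 (k-1)).image q.getVert := by
    ext x
    simp only [Finset.mem_erase, Finset.mem_image, Finset.mem_Icc, hS, List.mem_toFinset]
    constructor
    · rintro ⟨hxr, hxs⟩
      have hd := (mem_support_iff_dist hT q hq x).mp hxs
      have hpos : 0 < T.dist x r := hT.isConnected.pos_dist_of_ne hxr
      exact ⟨T.dist v x, ⟨by omega, by omega⟩, (eq_getVert_of hT q hq (by omega)).symm⟩
    · rintro ⟨j, ⟨hj1, hj2⟩, rfl⟩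
      have h2 := (getVert_dists hT q hq j (by omega)).2
      constructor
      · intro he
        rw [he] at h2
        have : T.dist r r = 0 := SimpleGraph.dist_self ..
        omega
      · exact getVert_mem_support' q j
  have hsv : ∑ w ∈ S.erase v, 2 ^ hgt T v w = ∑ j ∈ Finset.Icc 1 k, 2 ^ hgt T v (q.getVert j) := by
    rw [himgv, Finset.sum_image]
    intro i hi j hj he
    exact hinj i (Finset.mem_Icc.mp hi).2 j (Finset.mem_Icc.mp hj).2 he
  have hsr : ∑ w ∈ S.erase r, 2 ^ hgt T r w
      = ∑ j ∈ Finset.Icc 0 (k-1), 2 ^ hgt T r (q.getVert j) := by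
    rw [himgr, Finset.sum_image]
    intro i hi j hj he
    exact hinj i (by have := (Finset.mem_Icc.mp hi).2; omega)
      j (by have := (Finset.mem_Icc.mp hj).2; omega) he
  have hkey : ∑ j ∈ Finset.Icc 1 k, 2 ^ hgt T v (q.getVert j)
      ≤ ∑ j ∈ Finset.Icc 0 (k-1), 2 ^ hgt T r (q.getVert j) := by
    calc ∑ j ∈ Finset.Icc 1 k, 2 ^ hgt T v (q.getVert j)
        ≤ ∑ j ∈ Finset.Icc 1 k, 2 ^ hgt T r (q.getVert (k - j)) := by
          apply Finset.sum_le_sum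
          intro j hj
          have h1 := (Finset.mem_Icc.mp hj).1
          have h2 := (Finset.mem_Icc.mp hj).2
          exact Nat.pow_le_pow_right (by norm_num)
            (key_ineq hT p hp hmax q hq h1 h2)
      _ = ∑ j ∈ Finset.Icc 0 (k-1), 2 ^ hgt T r (q.getVert j) := by
          apply Finset.sum_nbij' (fun j => k - j) (fun j => k - j)
          · intro a ha
            have := Finset.mem_Icc.mp ha
            rw [Finset.mem_Icc]
            omega
          · intro a ha
            have := Finset.mem_Icc.mp ha
            rw [Finset.mem_Icc]
            omega
          · intro a ha
            have := Finset.mem_Icc.mp ha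
            omega
          · intro a ha
            have := Finset.mem_Icc.mp ha
            omega
          · intro a ha
            rfl
  rw [hGv, hGr, hsplit v hvS, hsplit r hrS, Finset.sum_union (hdisj v),
    Finset.sum_union (hdisj r)]
  have hoffeq : ∑ x ∈ Finset.univ \ S, 2 ^ hgt T v x = ∑ x ∈ Finset.univ \ S, 2 ^ hgt T r x :=
    Finset.sum_congr rfl hoff
  rw [hsv, hsr] at *
  omega

end PebTree

open PebTree in
theorem pebbling_number_at_peripheral_vertex [Fintype V] [DecidableEq V]
    (T : SimpleGraph V) (hT : T.IsTree) (r : V)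
    (hr : ∃ u : V, ∃ p : T.Walk u r, p.IsPath ∧
      ∀ (a b : V) (q : T.Walk a b), q.IsPath → q.length ≤ p.length) :
    pebNumTo T r = pebNum T := by
  classical
  letI : DecidableRel T.Adj := Classical.decRel _
  obtain ⟨u₀, p, hp, hmax⟩ := hr
  set G := gaux T r r with hG
  -- reaching any target with more than its bound
  have reach_w : ∀ (w : V) (D : V → ℕ), gaux T w w < ∑ x, D x → Reaches T D w 1 := by
    intro w D hlt
    apply reaches_of_pf hT
    by_contra hcon
    push_neg at hcon
    have hpf0 : pf T w D w ≤ 0 := by omega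
    have := sum_le_of_pf_le (ρ := w) hT w D 0 hpf0
    rw [subtree_root_eq_univ] at this
    simp only [Nat.zero_mul, Nat.zero_add] at this
    omega
  -- the extremal unsolvable distribution
  obtain ⟨D₀, hD₀out, hD₀sum, hD₀pf⟩ := exists_extremal (ρ := r) hT r 0
  have hD₀sum' : ∑ x, D₀ x = G := by
    rw [hD₀sum]; omega
  -- unsolvable distributions of every size up to G
  have hbad : ∀ k ≤ G, ∃ D : V → ℕ, (∑ x, D x) = k ∧ ¬ Reaches T D r 1 := by
    intro k hk
    obtain ⟨D', hle, hsum⟩ := exists_le_sum D₀ k (by omega)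
    refine ⟨D', hsum, ?_⟩
    intro hre
    have h1 := reach_le_pf (ρ := r) hT D' hre
    have h2 := pf_mono (ρ := r) hT D' D₀ r hle
    omega
  -- both thresholds equal G + 1
  have hmemA : (G + 1) ∈ {k : ℕ | ∀ D : V → ℕ, (∑ v, D v) = k → Reaches T D r 1} := by
    intro D hD
    exact reach_w r D (by omega)
  have hmemB : (G + 1) ∈ {k : ℕ | ∀ D : V → ℕ, (∑ v, D v) = k → Solvable T D} := by
    intro D hD w
    have hle : gaux T w w ≤ G := peripheral_max hT p hp hmax w
    exact reach_w w D (by omega)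
  have hlbA : ∀ k ∈ {k : ℕ | ∀ D : V → ℕ, (∑ v, D v) = k → Reaches T D r 1}, G + 1 ≤ k := by
    intro k hk
    by_contra hcon
    push_neg at hcon
    obtain ⟨D, hDsum, hDbad⟩ := hbad k (by omega)
    exact hDbad (hk D hDsum)
  have hlbB : ∀ k ∈ {k : ℕ | ∀ D : V → ℕ, (∑ v, D v) = k → Solvable T D}, G + 1 ≤ k := by
    intro k hk
    by_contra hcon
    push_neg at hcon
    obtain ⟨D, hDsum, hDbad⟩ := hbad k (by omega)
    exact hDbad (hk D hDsum r)
  have hA : pebNumTo T r = G + 1 := by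
    unfold pebNumTo
    exact le_antisymm (Nat.sInf_le hmemA) (le_csInf ⟨G + 1, hmemA⟩ hlbA)
  have hB : pebNum T = G + 1 := by
    unfold pebNum
    exact le_antisymm (Nat.sInf_le hmemB) (le_csInf ⟨G + 1, hmemB⟩ hlbB)
  rw [hA, hB]
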